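/- arXiv:1206.0887 — 2 statements merged into one kernel-verified Lean document; each statement's English description precedes it below -/
import Mathlib

section
/- Let V be an n-dimensional vector space over ℤ/2, b : V × V → ℤ/2 a symmetric bilinear form with b(v,v) = 0 for all v, A(V,b) the associated intersection algebra, and Q the (nonempty, finite) set of quadratic refinements of b. Then the ℂ-linear map A(V,b) → ℂ^Q sending the basis element [v] to the tuple ((−1)^{q(v)})_{q ∈ Q} is an isomorphism of unital ℂ-algebras, where ℂ^Q carries the componentwise product. -/
/-- The sign `(-1)^x ∈ ℂ` attached to `x ∈ ℤ/2`. -/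
noncomputable def sgnC (x : ZMod 2) : ℂ := if x = 0 then 1 else -1

lemma zmod2_cases (a : ZMod 2) : a = 0 ∨ a = 1 := by revert a; decide

lemma zmod2_add_self (a : ZMod 2) : a + a = 0 := by revert a; decide

lemma sgnC_zero : sgnC 0 = 1 := by simp [sgnC]

lemma sgnC_add (x y : ZMod 2) : sgnC (x + y) = sgnC x * sgnC y := by
  rcases zmod2_cases x with h | h <;> rcases zmod2_cases y with h' | h' <;>
    subst h <;> subst h' <;>
    simp [sgnC, show (1 : ZMod 2) + 1 = 0 from by decide]

lemma sgnC_mul_self (x : ZMod 2) : sgnC x * sgnC x = 1 := by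
  rw [← sgnC_add, zmod2_add_self, sgnC_zero]

lemma sgnC_one_add (x : ZMod 2) : sgnC (1 + x) = - sgnC x := by
  rcases zmod2_cases x with h | h <;> subst h <;>
    simp [sgnC, show (1 : ZMod 2) + 1 = 0 from by decide]

section Refinement

variable {V : Type*} [AddCommGroup V] [Module (ZMod 2) V] [FiniteDimensional (ZMod 2) V]

/-- existence of a quadratic refinement -/
lemma exists_refinement (b : V →ₗ[ZMod 2] V →ₗ[ZMod 2] ZMod 2)
    (hsymm : ∀ u v : V, b u v = b v u) (halt : ∀ v : V, b v v = 0) :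
    ∃ q : V → ZMod 2, ∀ u v : V, q (u + v) = q u + q v + b u v := by
  classical
  set e := Module.finBasis (ZMod 2) V with he
  set M := LinearMap.toMatrix₂ e e b with hM
  set N : Matrix (Fin (Module.finrank (ZMod 2) V)) (Fin (Module.finrank (ZMod 2) V)) (ZMod 2) := fun i j => if (i : ℕ) < j then M i j else 0 with hN
  set B := Matrix.toLinearMap₂ e e N with hB
  have hBe : ∀ i j, B (e i) (e j) = N i j := by
    intro i j
    have : LinearMap.toMatrix₂ e e B = N := by
      rw [hB, Matrix.toLinearMap₂]
      exact (LinearMap.toMatrix₂ e e).apply_symm_apply N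
    rw [← this, LinearMap.toMatrix₂_apply]
  have key : B + B.flip = b := by
    apply LinearMap.ext_basis e e
    intro i j
    have hMe : M i j = b (e i) (e j) := LinearMap.toMatrix₂_apply e e b i j
    have hMe' : M j i = b (e j) (e i) := LinearMap.toMatrix₂_apply e e b j i
    simp only [LinearMap.add_apply, LinearMap.flip_apply, hBe]
    rcases lt_trichotomy (i : ℕ) (j : ℕ) with h | h | h
    · rw [hN]; simp only [if_pos h, if_neg (by omega : ¬ (j : ℕ) < i)]
      rw [hMe, add_zero]
    · have hij : i = j := Fin.ext h
      subst hij
      rw [hN]; simp only [if_neg (lt_irrefl _)]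
      rw [halt, add_zero]
    · rw [hN]; simp only [if_neg (by omega : ¬ (i : ℕ) < j), if_pos h]
      rw [hMe', zero_add, hsymm]
  refine ⟨fun v => B v v, fun u v => ?_⟩
  have hb : B u v + B v u = b u v := by
    have := congrArg (fun f => f u v) key
    simpa using this
  have expand : B (u + v) (u + v) = B u u + B u v + (B v u + B v v) := by
    simp only [map_add, LinearMap.add_apply]
    abel
  show B (u + v) (u + v) = B u u + B v v + b u v
  rw [expand, ← hb]
  abel

end Refinement

section DualSum

variable {V : Type*} [AddCommGroup V] [Module (ZMod 2) V] [FiniteDimensional (ZMod 2) V]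

lemma dual_sum_eq_zero [Fintype (Module.Dual (ZMod 2) V)] {u : V} (hu : u ≠ 0) :
    ∑ ℓ : Module.Dual (ZMod 2) V, sgnC (ℓ u) = 0 := by
  obtain ⟨ℓ₀, hℓ₀⟩ : ∃ ℓ₀ : Module.Dual (ZMod 2) V, ℓ₀ u ≠ 0 := by
    by_contra h
    push_neg at h
    exact hu ((Module.forall_dual_apply_eq_zero_iff (ZMod 2) u).mp h)
  have hone : ℓ₀ u = 1 := (zmod2_cases (ℓ₀ u)).resolve_left hℓ₀
  have key : ∑ ℓ : Module.Dual (ZMod 2) V, sgnC (ℓ u)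
      = - ∑ ℓ : Module.Dual (ZMod 2) V, sgnC (ℓ u) := by
    calc ∑ ℓ : Module.Dual (ZMod 2) V, sgnC (ℓ u)
        = ∑ ℓ : Module.Dual (ZMod 2) V, sgnC ((ℓ₀ + ℓ) u) :=
          (Fintype.sum_equiv (Equiv.addLeft ℓ₀) _ _ (fun ℓ => rfl)).symm
      _ = ∑ ℓ : Module.Dual (ZMod 2) V, - sgnC (ℓ u) := by
          refine Finset.sum_congr rfl fun ℓ _ => ?_
          rw [LinearMap.add_apply, hone, sgnC_one_add]
      _ = - ∑ ℓ : Module.Dual (ZMod 2) V, sgnC (ℓ u) := by rw [Finset.sum_neg_distrib]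
  have : ∑ ℓ : Module.Dual (ZMod 2) V, sgnC (ℓ u)
      + ∑ ℓ : Module.Dual (ZMod 2) V, sgnC (ℓ u) = 0 := by
    nth_rewrite 2 [key]; ring
  exact add_self_eq_zero.mp this

omit [FiniteDimensional (ZMod 2) V] in
lemma add_self_eq_zero_mod (w : V) : w + w = 0 := by
  have h : (2 : ZMod 2) • w = w + w := two_smul _ w
  rw [show (2 : ZMod 2) = 0 from by decide, zero_smul] at h
  exact h.symm

end DualSum

/-- for a symmetric alternating bilinear form `b` on a
finite-dimensional `ℤ/2`-vector space `V`, the linear map from the intersection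
algebra `A(V,b)` to `ℂ^Q` (where `Q` is the set of quadratic refinements of `b`)
sending `[v]` to `((-1)^{q v})_{q ∈ Q}` is an isomorphism of unital
ℂ-algebras. -/
theorem intersection_algebra_iso_functions_on_refinements
    (V : Type*) [AddCommGroup V] [Module (ZMod 2) V]
    [FiniteDimensional (ZMod 2) V]
    (b : V →ₗ[ZMod 2] V →ₗ[ZMod 2] ZMod 2)
    (hsymm : ∀ u v : V, b u v = b v u)
    (halt : ∀ v : V, b v v = 0)
    (mul : (V →₀ ℂ) →ₗ[ℂ] (V →₀ ℂ) →ₗ[ℂ] (V →₀ ℂ))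
    (hmul : ∀ u v : V, mul (Finsupp.single u 1) (Finsupp.single v 1)
      = sgnC (b u v) • Finsupp.single (u + v) (1 : ℂ)) :
    let Q := {q : V → ZMod 2 // ∀ u v : V, q (u + v) = q u + q v + b u v}
    let Φ : (V →₀ ℂ) →ₗ[ℂ] (Q → ℂ) :=
      Finsupp.linearCombination ℂ (fun v => fun q : Q => sgnC (q.1 v))
    Function.Bijective Φ ∧
    (∀ x y : V →₀ ℂ, Φ (mul x y) = Φ x * Φ y) ∧
    Φ (Finsupp.single 0 1) = 1 := by
  classical
  intro Q Φ
  haveI : Finite V := Module.finite_of_finite (ZMod 2)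
  haveI : Fintype V := Fintype.ofFinite V
  haveI : Finite (Module.Dual (ZMod 2) V) := Module.finite_of_finite (ZMod 2)
  haveI : Fintype (Module.Dual (ZMod 2) V) := Fintype.ofFinite _
  -- every refinement vanishes at 0
  have hq0 : ∀ q : Q, q.1 0 = 0 := by
    intro q
    have h := q.2 0 0
    have hb : (b 0) (0 : V) = 0 := by simp
    rw [add_zero, hb, add_zero, zmod2_add_self] at h
    exact h
  -- a base refinement
  obtain ⟨q₀, hq₀⟩ := exists_refinement b hsymm halt
  have hq₀0 : q₀ 0 = 0 := hq0 ⟨q₀, hq₀⟩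
  -- equivalence between the dual space and Q
  let E : Module.Dual (ZMod 2) V ≃ Q :=
  { toFun := fun ℓ => ⟨fun v => q₀ v + ℓ v, by
      intro u v
      show q₀ (u + v) + ℓ (u + v) = (q₀ u + ℓ u) + (q₀ v + ℓ v) + b u v
      rw [hq₀, map_add]
      ring⟩
    invFun := fun q =>
      { toFun := fun v => q.1 v + q₀ v
        map_add' := by
          intro u v
          show q.1 (u + v) + q₀ (u + v) = (q.1 u + q₀ u) + (q.1 v + q₀ v)
          rw [q.2, hq₀]
          linear_combination zmod2_add_self ((b u) v)
        map_smul' := by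
          intro a v
          rcases zmod2_cases a with h | h <;> subst h
          · simp [hq0 q, hq₀0]
          · simp }
    left_inv := by
      intro ℓ
      ext v
      show q₀ v + ℓ v + q₀ v = ℓ v
      linear_combination zmod2_add_self (q₀ v)
    right_inv := by
      intro q
      apply Subtype.ext
      funext v
      show q₀ v + (q.1 v + q₀ v) = q.1 v
      linear_combination zmod2_add_self (q₀ v) }
  haveI : Fintype Q := Fintype.ofEquiv _ E
  -- orthogonality
  have orth : ∀ v w : V, ∑ q : Q, sgnC (q.1 v) * sgnC (q.1 w)
      = if v = w then (Fintype.card Q : ℂ) else 0 := by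
    intro v w
    by_cases h : v = w
    · subst h
      rw [if_pos rfl]
      have : ∀ q : Q, sgnC (q.1 v) * sgnC (q.1 v) = 1 := fun q => sgnC_mul_self _
      simp [this]
    · rw [if_neg h]
      have hu : v + w ≠ 0 := by
        intro hvw
        apply h
        have : v = v + (w + w) := by rw [add_self_eq_zero_mod, add_zero]
        rw [← add_assoc, hvw, zero_add] at this
        exact this
      calc ∑ q : Q, sgnC (q.1 v) * sgnC (q.1 w)
          = ∑ ℓ : Module.Dual (ZMod 2) V, sgnC ((E ℓ).1 v) * sgnC ((E ℓ).1 w) :=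
            (Fintype.sum_equiv E _ _ (fun ℓ => rfl)).symm
        _ = ∑ ℓ : Module.Dual (ZMod 2) V,
              (sgnC (q₀ v) * sgnC (q₀ w)) * sgnC (ℓ (v + w)) := by
            refine Finset.sum_congr rfl fun ℓ _ => ?_
            show sgnC (q₀ v + ℓ v) * sgnC (q₀ w + ℓ w) = _
            rw [sgnC_add, sgnC_add, map_add, sgnC_add]
            ring
        _ = (sgnC (q₀ v) * sgnC (q₀ w)) * ∑ ℓ : Module.Dual (ZMod 2) V, sgnC (ℓ (v + w)) := by
            rw [Finset.mul_sum]
        _ = 0 := by rw [dual_sum_eq_zero hu, mul_zero]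
  -- pointwise formula for Φ
  have hΦ : ∀ (x : V →₀ ℂ) (q : Q), Φ x q = ∑ v ∈ x.support, x v * sgnC (q.1 v) := by
    intro x q
    show (Finsupp.linearCombination ℂ (fun v => fun q : Q => sgnC (q.1 v)) x) q = _
    rw [Finsupp.linearCombination_apply, Finsupp.sum, Finset.sum_apply]
    refine Finset.sum_congr rfl fun v _ => ?_
    simp
  -- injectivity
  have hinj : Function.Injective Φ := by
    rw [← LinearMap.ker_eq_bot]
    rw [LinearMap.ker_eq_bot']
    intro x hx
    ext w
    by_cases hw : w ∈ x.support
    · have hzero : ∀ q : Q, ∑ v ∈ x.support, x v * sgnC (q.1 v) = 0 := by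
        intro q
        rw [← hΦ x q, hx]
        rfl
      have hsum : (0 : ℂ) = ∑ q : Q, sgnC (q.1 w) * ∑ v ∈ x.support, x v * sgnC (q.1 v) := by
        simp [hzero]
      have hswap : ∑ q : Q, sgnC (q.1 w) * ∑ v ∈ x.support, x v * sgnC (q.1 v)
          = ∑ v ∈ x.support, x v * ∑ q : Q, sgnC (q.1 w) * sgnC (q.1 v) := by
        simp_rw [Finset.mul_sum]
        rw [Finset.sum_comm]
        refine Finset.sum_congr rfl fun v _ => ?_
        refine Finset.sum_congr rfl fun q _ => ?_
        ring
      rw [hswap] at hsum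
      have : ∑ v ∈ x.support, x v * ∑ q : Q, sgnC (q.1 w) * sgnC (q.1 v)
          = x w * (Fintype.card Q : ℂ) := by
        have : ∀ v ∈ x.support, x v * ∑ q : Q, sgnC (q.1 w) * sgnC (q.1 v)
            = if w = v then x v * (Fintype.card Q : ℂ) else 0 := by
          intro v _
          rw [orth w v]
          by_cases hwv : w = v
          · rw [if_pos hwv, if_pos hwv]
          · rw [if_neg hwv, if_neg hwv, mul_zero]
        rw [Finset.sum_congr rfl this, Finset.sum_ite_eq, if_pos hw]
      rw [this] at hsum
      have hcard : (Fintype.card Q : ℂ) ≠ 0 := by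
        have hpos : 0 < Fintype.card Q := Fintype.card_pos_iff.mpr ⟨⟨q₀, hq₀⟩⟩
        exact Nat.cast_ne_zero.mpr hpos.ne'
      have := hsum.symm
      rw [mul_eq_zero] at this
      rcases this with h | h
      · rw [h]; rfl
      · exact absurd h hcard
    · rw [Finsupp.notMem_support_iff] at hw
      rw [hw]; rfl
  -- surjectivity by dimension count
  have hsurj : Function.Surjective Φ := by
    have hdim : Module.finrank ℂ (V →₀ ℂ) = Module.finrank ℂ (Q → ℂ) := by
      rw [Module.finrank_finsupp_self, Module.finrank_pi]
      rw [← Fintype.card_congr E]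
      rw [Module.card_eq_pow_finrank (K := ZMod 2) (V := V),
          Module.card_eq_pow_finrank (K := ZMod 2) (V := Module.Dual (ZMod 2) V)]
      congr 1
      rw [Module.finrank_linearMap, Module.finrank_self, mul_one]
    exact (LinearMap.injective_iff_surjective_of_finrank_eq_finrank hdim).mp hinj
  refine ⟨⟨hinj, hsurj⟩, ?_, ?_⟩
  · -- multiplicativity
    have key : ∀ u v : V, Φ (mul (Finsupp.single u 1) (Finsupp.single v 1))
        = Φ (Finsupp.single u 1) * Φ (Finsupp.single v 1) := by
      intro u v
      rw [hmul, map_smul]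
      show sgnC (b u v) • (Finsupp.linearCombination ℂ _ (Finsupp.single (u+v) 1)) = _
      rw [Finsupp.linearCombination_single, Finsupp.linearCombination_single,
        Finsupp.linearCombination_single, one_smul, one_smul, one_smul]
      funext q
      show sgnC (b u v) * sgnC (q.1 (u + v)) = sgnC (q.1 u) * sgnC (q.1 v)
      rw [q.2 u v, sgnC_add, sgnC_add]
      linear_combination (sgnC (q.1 u) * sgnC (q.1 v)) * sgnC_mul_self ((b u) v)
    intro x y
    induction x using Finsupp.induction_linear with
    | zero => simp
    | add f g hf hg => simp [map_add, LinearMap.add_apply, hf, hg, add_mul]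
    | single a c =>
      induction y using Finsupp.induction_linear with
      | zero => simp
      | add f g hf hg => simp [map_add, hf, hg, mul_add]
      | single a' c' =>
        have e1 : (Finsupp.single a c : V →₀ ℂ) = c • Finsupp.single a 1 := by
          rw [Finsupp.smul_single, smul_eq_mul, mul_one]
        have e2 : (Finsupp.single a' c' : V →₀ ℂ) = c' • Finsupp.single a' 1 := by
          rw [Finsupp.smul_single, smul_eq_mul, mul_one]
        rw [e1, e2]
        simp only [map_smul, LinearMap.smul_apply]
        rw [key a a', smul_smul, smul_mul_assoc, mul_smul_comm, smul_smul, mul_comm c' c]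
  · -- unit
    show (Finsupp.linearCombination ℂ _ (Finsupp.single 0 1)) = 1
    rw [Finsupp.linearCombination_single, one_smul]
    funext q
    show sgnC (q.1 0) = 1
    rw [hq0 q, sgnC_zero]
end

section
/- Fix real numbers τ_a, τ_b, τ_c, τ_d, τ_e with sin τ_e ≠ 0, and for real ℏ (small enough that sin(τ_e+ℏ) ≠ 0 and sin(τ_e−ℏ) ≠ 0) define I(ℏ) = 2cos(τ_c+τ_d−ℏ) + 4·[sin((τ_a+τ_d−τ_e−ℏ)/2)·sin((τ_a−τ_d+τ_e+ℏ)/2)·sin((τ_b+τ_c−τ_e−ℏ)/2)·sin((τ_b−τ_c+τ_e+ℏ)/2)]/(sin(τ_e)·sin(τ_e+ℏ)) + 4·[sin((τ_a+τ_d+τ_e−ℏ)/2)·sin((−τ_a+τ_d+τ_e−ℏ)/2)·sin((τ_b+τ_c+τ_e−ℏ)/2)·sin((−τ_b+τ_c+τ_e−ℏ)/2)]/(sin(τ_e)·sin(τ_e−ℏ)). Then the limit of (I(ℏ) − I(0))/ℏ as ℏ → 0 is 0; equivalently, I(ℏ) = I(0) + o(ℏ), i.e., the first-order term in ℏ of I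 vanishes. -/
open Real Filter

/-- The function `I(ℏ)` appearing as the constant Fourier coefficient of the
ψ-symbol of the curve `Dₑ` joining two distinct trivalent vertices. -/
noncomputable def I8 (τa τb τc τd τe h : ℝ) : ℝ :=
  2 * Real.cos (τc + τd - h)
  + 4 * (Real.sin ((τa + τd - τe - h) / 2) * Real.sin ((τa - τd + τe + h) / 2)
      * Real.sin ((τb + τc - τe - h) / 2) * Real.sin ((τb - τc + τe + h) / 2))
      / (Real.sin τe * Real.sin (τe + h))
  + 4 * (Real.sin ((τa + τd + τe - h) / 2) * Real.sin ((-τa + τd + τe - h) / 2)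
      * Real.sin ((τb + τc + τe - h) / 2) * Real.sin ((-τb + τc + τe - h) / 2))
      / (Real.sin τe * Real.sin (τe - h))

/-- the first-order term in `ℏ` of `I` vanishes:
`(I(ℏ) − I(0))/ℏ → 0` as `ℏ → 0`. -/
theorem first_order_of_I_vanishes (τa τb τc τd τe : ℝ) (hτe : Real.sin τe ≠ 0) :
    Tendsto (fun h : ℝ => (I8 τa τb τc τd τe h - I8 τa τb τc τd τe 0) / h)
      (nhdsWithin 0 {0}ᶜ) (nhds 0) := by
  have pair : ∀ X Y : ℝ,
      2 * (Real.sin ((X + Y) / 2) * Real.sin ((X - Y) / 2)) = Real.cos Y - Real.cos X := by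
    intro X Y
    rw [Real.cos_sub_cos, show (Y + X) / 2 = (X + Y) / 2 by ring,
      show (Y - X) / 2 = -((X - Y) / 2) by ring, Real.sin_neg]
    ring
  have Heq : ∀ h : ℝ, I8 τa τb τc τd τe h =
      2 * Real.cos (τc + τd - h)
      + (Real.cos (τd - τe - h) - Real.cos τa) * (Real.cos (τc - τe - h) - Real.cos τb)
          / (Real.sin τe * Real.sin (τe + h))
      + (Real.cos τa - Real.cos (τd + τe - h)) * (Real.cos τb - Real.cos (τc + τe - h))
          / (Real.sin τe * Real.sin (τe - h)) := by
    intro h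
    have e1 := pair τa (τd - τe - h)
    rw [show (τa + (τd - τe - h)) / 2 = (τa + τd - τe - h) / 2 by ring,
      show (τa - (τd - τe - h)) / 2 = (τa - τd + τe + h) / 2 by ring] at e1
    have e2 := pair τb (τc - τe - h)
    rw [show (τb + (τc - τe - h)) / 2 = (τb + τc - τe - h) / 2 by ring,
      show (τb - (τc - τe - h)) / 2 = (τb - τc + τe + h) / 2 by ring] at e2
    have e3 := pair (τd + τe - h) τa
    rw [show (τd + τe - h + τa) / 2 = (τa + τd + τe - h) / 2 by ring,
      show (τd + τe - h - τa) / 2 = (-τa + τd + τe - h) / 2 by ring] at e3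
    have e4 := pair (τc + τe - h) τb
    rw [show (τc + τe - h + τb) / 2 = (τb + τc + τe - h) / 2 by ring,
      show (τc + τe - h - τb) / 2 = (-τb + τc + τe - h) / 2 by ring] at e4
    unfold I8
    have n1 : 4 * (Real.sin ((τa + τd - τe - h) / 2) * Real.sin ((τa - τd + τe + h) / 2)
        * Real.sin ((τb + τc - τe - h) / 2) * Real.sin ((τb - τc + τe + h) / 2))
        = (Real.cos (τd - τe - h) - Real.cos τa) * (Real.cos (τc - τe - h) - Real.cos τb) := by
      linear_combination (2 * (Real.sin ((τa + τd - τe - h) / 2)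
        * Real.sin ((τa - τd + τe + h) / 2))) * e2
        + (Real.cos (τc - τe - h) - Real.cos τb) * e1
    have n2 : 4 * (Real.sin ((τa + τd + τe - h) / 2) * Real.sin ((-τa + τd + τe - h) / 2)
        * Real.sin ((τb + τc + τe - h) / 2) * Real.sin ((-τb + τc + τe - h) / 2))
        = (Real.cos τa - Real.cos (τd + τe - h)) * (Real.cos τb - Real.cos (τc + τe - h)) := by
      linear_combination (2 * (Real.sin ((τa + τd + τe - h) / 2)
        * Real.sin ((-τa + τd + τe - h) / 2))) * e4
        + (Real.cos τb - Real.cos (τc + τe - h)) * e3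
    rw [n1, n2]
  -- derivatives of the simplified pieces at 0
  have hden1 : (fun h : ℝ => Real.sin τe * Real.sin (τe + h)) 0 ≠ 0 := by
    simpa using mul_ne_zero hτe hτe
  have hden2 : (fun h : ℝ => Real.sin τe * Real.sin (τe - h)) 0 ≠ 0 := by
    simpa using mul_ne_zero hτe hτe
  have H1 : HasDerivAt (fun h : ℝ => 2 * Real.cos (τc + τd - h)) (2 * Real.sin (τc + τd)) 0 := by
    have := (((hasDerivAt_id (0 : ℝ)).const_sub (τc + τd)).cos).const_mul (2 : ℝ)
    simpa using this
  have Hn1 : HasDerivAt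
      (fun h : ℝ => (Real.cos (τd - τe - h) - Real.cos τa) * (Real.cos (τc - τe - h) - Real.cos τb))
      (Real.sin (τd - τe) * (Real.cos (τc - τe) - Real.cos τb)
        + (Real.cos (τd - τe) - Real.cos τa) * Real.sin (τc - τe)) 0 := by
    have := ((((hasDerivAt_id (0 : ℝ)).const_sub (τd - τe)).cos.sub_const (Real.cos τa)).mul
      (((hasDerivAt_id (0 : ℝ)).const_sub (τc - τe)).cos.sub_const (Real.cos τb)))
    exact this.congr_deriv (by simp)
  have Hn2 : HasDerivAt
      (fun h : ℝ => (Real.cos τa - Real.cos (τd + τe - h)) * (Real.cos τb - Real.cos (τc + τe - h)))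
      (-(Real.sin (τd + τe)) * (Real.cos τb - Real.cos (τc + τe))
        + (Real.cos τa - Real.cos (τd + τe)) * (-(Real.sin (τc + τe)))) 0 := by
    have := ((((hasDerivAt_id (0 : ℝ)).const_sub (τd + τe)).cos.const_sub (Real.cos τa)).mul
      (((hasDerivAt_id (0 : ℝ)).const_sub (τc + τe)).cos.const_sub (Real.cos τb)))
    exact this.congr_deriv (by simp)
  have Hd1 : HasDerivAt (fun h : ℝ => Real.sin τe * Real.sin (τe + h))
      (Real.sin τe * Real.cos τe) 0 := by
    have := (((hasDerivAt_id (0 : ℝ)).const_add τe).sin).const_mul (Real.sin τe)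
    simpa using this
  have Hd2 : HasDerivAt (fun h : ℝ => Real.sin τe * Real.sin (τe - h))
      (-(Real.sin τe * Real.cos τe)) 0 := by
    have := (((hasDerivAt_id (0 : ℝ)).const_sub τe).sin).const_mul (Real.sin τe)
    exact this.congr_deriv (by simp)
  have Hfrac1 := Hn1.div Hd1 hden1
  have Hfrac2 := Hn2.div Hd2 hden2
  have HJ := (H1.add Hfrac1).add Hfrac2
  have HI := HJ.congr_of_eventuallyEq (Filter.Eventually.of_forall Heq)
  have H0 : HasDerivAt (fun h : ℝ => I8 τa τb τc τd τe h) 0 0 := by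
    refine HI.congr_deriv (Eq.symm ?_)
    simp only [add_zero, sub_zero]
    field_simp
    simp only [Real.sin_add, Real.sin_sub, Real.cos_add, Real.cos_sub]
    ring_nf
  have := hasDerivAt_iff_tendsto_slope.mp H0
  exact this.congr fun h => by rw [slope_def_field, sub_zero]
end
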